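/- With Φ as defined by (Φ(X)ψ)(U) = φ(U* X U) ψ(U) on L²(U_n, ℂ^N): if φ : M_n(ℂ) → M_N(ℂ) is t-positive, then Φ is t-positive; i.e., for every positive semi-definite element ρ ∈ M_t(ℂ) ⊗ M_n(ℂ), (id_t ⊗ Φ)(ρ) is a positive operator on ℂᵗ ⊗ L²(U_n, ℂ^N). -/

import Mathlib

open Matrix MeasureTheory ComplexOrder Kronecker

noncomputable section

variable (n N t : ℕ)

instance unitaryGroup.continuousInv : ContinuousInv (Matrix.unitaryGroup (Fin n) ℂ) := by
  constructor
  rw [continuous_induced_rng]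
  exact continuous_star.comp continuous_subtype_val

instance unitaryGroup.topologicalGroup : IsTopologicalGroup (Matrix.unitaryGroup (Fin n) ℂ) := {}

instance unitaryGroup.measurableSpace : MeasurableSpace (Matrix.unitaryGroup (Fin n) ℂ) :=
  borel _

/-- `(id_t ⊗ φ)` applied to an element of `M_t(ℂ) ⊗ M_n(ℂ)`. -/
def idTensor (φ : Matrix (Fin n) (Fin n) ℂ →ₗ[ℂ] Matrix (Fin N) (Fin N) ℂ)
    (ρ : Matrix (Fin t × Fin n) (Fin t × Fin n) ℂ) :
    Matrix (Fin t × Fin N) (Fin t × Fin N) ℂ :=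
  fun p q => φ (Matrix.of fun a b => ρ (p.1, a) (q.1, b)) p.2 q.2

/-- The block of `(id_t ⊗ Φ)(ρ)` at the point `U` of the unitary group, where
`Φ` is the map `(Φ(X)ψ)(U) = φ(U* X U) ψ(U)` on `L²(U_n, ℂ^N)`:
it equals `(id_t ⊗ φ)((1 ⊗ U)* ρ (1 ⊗ U))`. -/
def idTensorPhiAt (φ : Matrix (Fin n) (Fin n) ℂ →ₗ[ℂ] Matrix (Fin N) (Fin N) ℂ)
    (ρ : Matrix (Fin t × Fin n) (Fin t × Fin n) ℂ)
    (U : Matrix.unitaryGroup (Fin n) ℂ) :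
    Matrix (Fin t × Fin N) (Fin t × Fin N) ℂ :=
  idTensor n N t φ
    (((1 : Matrix (Fin t) (Fin t) ℂ) ⊗ₖ (U : Matrix (Fin n) (Fin n) ℂ))ᴴ * ρ *
      ((1 : Matrix (Fin t) (Fin t) ℂ) ⊗ₖ (U : Matrix (Fin n) (Fin n) ℂ)))

/-- If `φ` is `t`-positive then the induced map `Φ` on `L²(U_n, ℂ^N)` is `t`-positive:
for every positive semi-definite `ρ ∈ M_t(ℂ) ⊗ M_n(ℂ)`, the operator `(id_t ⊗ Φ)(ρ)`
on `ℂᵗ ⊗ L²(U_n, ℂ^N)` is positive, i.e. all its diagonal matrix coefficients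
`⟨ψ, (id_t ⊗ Φ)(ρ) ψ⟩ = ∫ ⟨ψ(U), (id_t ⊗ φ)((1⊗U)* ρ (1⊗U)) ψ(U)⟩ dHaar(U)`
are nonnegative. -/
theorem PhiReg_t_positive_of_t_positive
    (μ : Measure (Matrix.unitaryGroup (Fin n) ℂ)) [μ.IsHaarMeasure]
    (φ : Matrix (Fin n) (Fin n) ℂ →ₗ[ℂ] Matrix (Fin N) (Fin N) ℂ)
    (hφ : ∀ ρ : Matrix (Fin t × Fin n) (Fin t × Fin n) ℂ,
        ρ.PosSemidef → (idTensor n N t φ ρ).PosSemidef)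
    (ρ : Matrix (Fin t × Fin n) (Fin t × Fin n) ℂ) (hρ : ρ.PosSemidef)
    (ψ : Matrix.unitaryGroup (Fin n) ℂ → (Fin t × Fin N → ℂ))
    (hψ : MemLp ψ 2 μ) :
    0 ≤ ∫ U, star (ψ U) ⬝ᵥ (idTensorPhiAt n N t φ ρ U).mulVec (ψ U) ∂μ := by
  have hpos : ∀ U, 0 ≤ star (ψ U) ⬝ᵥ (idTensorPhiAt n N t φ ρ U).mulVec (ψ U) := by
    intro U
    exact (hφ _ (hρ.conjTranspose_mul_mul_same _)).dotProduct_mulVec_nonneg (ψ U)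
  by_cases hint : Integrable
      (fun U => star (ψ U) ⬝ᵥ (idTensorPhiAt n N t φ ρ U).mulVec (ψ U)) μ
  · rw [Complex.nonneg_iff]
    constructor
    · rw [← RCLike.re_to_complex, ← integral_re hint]
      exact MeasureTheory.integral_nonneg fun U => (Complex.nonneg_iff.mp (hpos U)).1
    · rw [← RCLike.im_to_complex, ← integral_im hint]
      symm
      apply MeasureTheory.integral_eq_zero_of_ae
      filter_upwards with U
      exact (Complex.nonneg_iff.mp (hpos U)).2.symm
  · rw [MeasureTheory.integral_undef hint]
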